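/- Let H₀, H₁, …, H_r be n×n Hermitian complex matrices, let ψ_f ∈ ℂⁿ be a unit vector satisfying H₀ ψ_f = λ ψ_f for some real λ, let u₁, …, u_r : ℝ → ℝ be continuous, and let ψ : ℝ → ℂⁿ be a continuously differentiable solution of the controlled Schrödinger equation i ψ′(t) = (H₀ + Σ_{j=1}^{r} u_j(t) H_j) ψ(t). Then the Lyapunov function V(t) = 1 − |⟨ψ_f, ψ(t)⟩|² is differentiable with V′(t) = −2 Σ_{j=1}^{r} u_j(t) · Im( ⟨ψ_f, H_j ψ(t)⟩ · ⟨ψ(t), ψ_f⟩ ) for every t. -/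

import Mathlib

open scoped BigOperators ComplexConjugate

/-- Let `H₀, H₁, …, H_r` be `n×n` Hermitian matrices, `ψ_f` a unit
vector with `H₀ ψ_f = λ ψ_f` (`λ ∈ ℝ`), `u_j : ℝ → ℝ` continuous controls and
`ψ : ℝ → ℂⁿ` a continuously differentiable solution of
`i ψ'(t) = (H₀ + ∑_j u_j(t) H_j) ψ(t)`. Then `V(t) = 1 - |⟨ψ_f, ψ(t)⟩|²` is
differentiable with
`V'(t) = -2 ∑_j u_j(t) Im(⟨ψ_f, H_j ψ(t)⟩ ⟨ψ(t), ψ_f⟩)` for every `t`.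
Here `⟨x, y⟩ = ∑ i, conj (x i) * y i`. -/
theorem lyapunov_derivative_general
    (n r : ℕ) (H0 : Matrix (Fin n) (Fin n) ℂ) (H : Fin r → Matrix (Fin n) (Fin n) ℂ)
    (hH0 : H0.IsHermitian) (hH : ∀ j, (H j).IsHermitian)
    (ψf : Fin n → ℂ) (hψf : ∑ i, ‖ψf i‖ ^ 2 = 1)
    (lam : ℝ) (heig : H0.mulVec ψf = (lam : ℂ) • ψf)
    (u : Fin r → ℝ → ℝ) (hu : ∀ j, Continuous (u j))
    (ψ : ℝ → Fin n → ℂ) (hψ : ContDiff ℝ 1 ψ)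
    (heq : ∀ t, Complex.I • deriv ψ t =
      (H0 + ∑ j, ((u j t : ℝ) : ℂ) • H j).mulVec (ψ t)) :
    ∀ t, HasDerivAt (fun s => 1 - ‖∑ i, conj (ψf i) * ψ s i‖ ^ 2)
      (-2 * ∑ j, u j t *
        ((∑ i, conj (ψf i) * (H j).mulVec (ψ t) i) * (∑ i, conj (ψ t i) * ψf i)).im) t := by
  intro t
  classical
  set ct : ℂ := ∑ i, conj (ψf i) * ψ t i with hct
  set dt : ℂ := ∑ i, conj (ψf i) * deriv ψ t i with hdt
  have hψd : HasDerivAt ψ (deriv ψ t) t := (hψ.differentiable one_ne_zero t).hasDerivAt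
  have hcoord : ∀ i, HasDerivAt (fun s => ψ s i) (deriv ψ t i) t := fun i =>
    (hasDerivAt_pi.mp hψd) i
  have hc : HasDerivAt (fun s => ∑ i, conj (ψf i) * ψ s i) dt t := by
    rw [hdt]
    exact HasDerivAt.fun_sum fun i _ => (hcoord i).const_mul _
  have hre : HasDerivAt (fun s => (∑ i, conj (ψf i) * ψ s i).re) dt.re t :=
    Complex.reCLM.hasFDerivAt.comp_hasDerivAt t hc
  have him : HasDerivAt (fun s => (∑ i, conj (ψf i) * ψ s i).im) dt.im t :=
    Complex.imCLM.hasFDerivAt.comp_hasDerivAt t hc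
  have hV : HasDerivAt (fun s => 1 - ‖∑ i, conj (ψf i) * ψ s i‖ ^ 2)
      (-(2 * ct.re * dt.re + 2 * ct.im * dt.im)) t := by
    have h1 : HasDerivAt (fun s => (∑ i, conj (ψf i) * ψ s i).re ^ 2
        + (∑ i, conj (ψf i) * ψ s i).im ^ 2)
        (2 * ct.re * dt.re + 2 * ct.im * dt.im) t := by
      have := (hre.pow 2).add (him.pow 2)
      exact this.congr_deriv (by simp [hct])
    have h2 := h1.const_sub 1
    refine h2.congr_of_eventuallyEq (Filter.Eventually.of_forall fun s => ?_)
    beta_reduce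
    rw [Complex.sq_norm, Complex.normSq_apply]
    ring
  convert hV using 1
  have hderiv : ∀ i, deriv ψ t i
      = -Complex.I * ((H0 + ∑ j, ((u j t : ℝ) : ℂ) • H j).mulVec (ψ t) i) := by
    intro i
    have h := congrFun (heq t) i
    simp only [Pi.smul_apply, smul_eq_mul] at h
    linear_combination -Complex.I * h + deriv ψ t i * Complex.I_sq
  have herm : ∀ i k, conj (H0 k i) = H0 i k := by
    intro i k
    have := congrFun (congrFun hH0.eq i) k
    simpa [Matrix.conjTranspose_apply] using this
  have hB : ∑ i, conj (ψf i) * H0.mulVec (ψ t) i = (lam : ℂ) * ct := by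
    have key : ∀ k, (∑ i, conj (ψf i) * H0 i k) = (lam : ℂ) * conj (ψf k) := by
      intro k
      have h1 : (∑ i, conj (ψf i) * H0 i k) = conj (∑ i, H0 k i * ψf i) := by
        rw [map_sum]
        refine Finset.sum_congr rfl fun i _ => ?_
        rw [map_mul, herm i k]
        ring
      rw [h1]
      have hk : (∑ i, H0 k i * ψf i) = (lam : ℂ) * ψf k := by
        have := congrFun heig k
        simpa [Matrix.mulVec, dotProduct] using this
      rw [hk, map_mul, Complex.conj_ofReal]
    calc ∑ i, conj (ψf i) * H0.mulVec (ψ t) i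
        = ∑ i, ∑ k, conj (ψf i) * H0 i k * ψ t k := by
          simp [Matrix.mulVec, dotProduct, Finset.mul_sum, mul_assoc]
      _ = ∑ k, (∑ i, conj (ψf i) * H0 i k) * ψ t k := by
          rw [Finset.sum_comm]
          simp [Finset.sum_mul]
      _ = (lam : ℂ) * ct := by
          simp only [key, hct, Finset.mul_sum]
          refine Finset.sum_congr rfl fun k _ => ?_
          ring
  set a : Fin r → ℂ := fun j => ∑ i, conj (ψf i) * (H j).mulVec (ψ t) i with ha
  have hdtval : dt = -Complex.I * ((lam : ℂ) * ct + ∑ j, ((u j t : ℝ) : ℂ) * a j) := by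
    rw [hdt]
    have h2 : ∀ i, conj (ψf i) * deriv ψ t i
        = -Complex.I * (conj (ψf i) * ((H0 + ∑ j, ((u j t : ℝ) : ℂ) • H j).mulVec (ψ t) i)) := by
      intro i; rw [hderiv i]; ring
    rw [Finset.sum_congr rfl fun i _ => h2 i, ← Finset.mul_sum]
    congr 1
    have expand : ∀ i, (H0 + ∑ j, ((u j t : ℝ) : ℂ) • H j).mulVec (ψ t) i
        = H0.mulVec (ψ t) i + ∑ j, ((u j t : ℝ) : ℂ) * (H j).mulVec (ψ t) i := by
      intro i
      simp only [Matrix.mulVec, dotProduct, Matrix.add_apply, Matrix.sum_apply,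
        Matrix.smul_apply, smul_eq_mul, add_mul, Finset.sum_add_distrib, Finset.sum_mul,
        Finset.mul_sum, mul_assoc]
      congr 1
      rw [Finset.sum_comm]
    simp only [expand, mul_add, Finset.sum_add_distrib, hB, Finset.mul_sum]
    congr 1
    rw [Finset.sum_comm]
    refine Finset.sum_congr rfl fun j _ => ?_
    rw [ha, Finset.mul_sum]
    refine Finset.sum_congr rfl fun i _ => ?_
    ring
  have hconj : (∑ i, conj (ψ t i) * ψf i) = conj ct := by
    rw [hct, map_sum]
    refine Finset.sum_congr rfl fun i _ => ?_
    rw [map_mul, RingHomCompTriple.comp_apply]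
    simp [mul_comm]
  have hgoal : ∀ j, (∑ i, conj (ψf i) * (H j).mulVec (ψ t) i) = a j := fun j => rfl
  simp only [hgoal]
  clear_value ct a
  set P := ∑ j, u j t * (a j).re with hP
  set Q := ∑ j, u j t * (a j).im with hQ
  have hSre : (∑ j, ((u j t : ℝ) : ℂ) * a j).re = P := by
    rw [Complex.re_sum, hP]
    exact Finset.sum_congr rfl fun j _ => by simp [Complex.mul_re]
  have hSim : (∑ j, ((u j t : ℝ) : ℂ) * a j).im = Q := by
    rw [Complex.im_sum, hQ]
    exact Finset.sum_congr rfl fun j _ => by simp [Complex.mul_im]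
  have hL : ∑ j, u j t * (a j * conj ct).im = ct.re * Q - ct.im * P := by
    rw [hP, hQ, Finset.mul_sum, Finset.mul_sum, ← Finset.sum_sub_distrib]
    refine Finset.sum_congr rfl fun j _ => ?_
    simp only [Complex.mul_im, Complex.conj_re, Complex.conj_im]
    ring
  rw [hconj, hL, hdtval]
  simp only [Complex.neg_re, Complex.neg_im, Complex.mul_re, Complex.mul_im,
    Complex.I_re, Complex.I_im, Complex.add_re, Complex.add_im, Complex.ofReal_re,
    Complex.ofReal_im, hSre, hSim]
  ring
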